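/- arXiv:1105.0215 — 3 statements merged into one kernel-verified Lean document; each statement's English description precedes it below -/
import Mathlib

section
/- The function g(β) = σ² + α ∫₀^∞ (pβ/(p+β)) e^{-p} dp, defined for β > 0 with σ² > 0 and α ≥ 0, has at least one fixed point β* > 0. -/
open MeasureTheory Set

lemma aux_integrable_xexp : IntegrableOn (fun p : ℝ => p * Real.exp (-p)) (Ioi 0) := by
  have h := Real.GammaIntegral_convergent (by norm_num : (0:ℝ) < 2)
  have : (fun x : ℝ => Real.exp (-x) * x ^ ((2:ℝ) - 1)) = fun x => x ^ (1:ℝ) * Real.exp (-x) := by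
    funext x; ring_nf
  rw [this] at h
  refine h.congr_fun (fun x hx => ?_) measurableSet_Ioi
  simp only [Real.rpow_one]

lemma aux_bound (β : ℝ) (hβ : 0 < β) (p : ℝ) (hp : p ∈ Ioi (0:ℝ)) :
    ‖(p * β / (p + β)) * Real.exp (-p)‖ ≤ p * Real.exp (-p) := by
  have hp0 : 0 < p := hp
  have hpβ : 0 < p + β := by linarith
  have h1 : 0 ≤ p * β / (p + β) * Real.exp (-p) := by positivity
  rw [Real.norm_eq_abs, abs_of_nonneg h1]
  have h2 : p * β / (p + β) ≤ p := by
    rw [div_le_iff₀ hpβ]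
    nlinarith
  exact mul_le_mul_of_nonneg_right h2 (Real.exp_pos _).le

lemma aux_meas (β : ℝ) :
    AEStronglyMeasurable (fun p : ℝ => (p * β / (p + β)) * Real.exp (-p))
      (volume.restrict (Ioi 0)) := by
  apply Measurable.aestronglyMeasurable
  exact ((measurable_id.mul_const β).div (measurable_id.add_const β)).mul
    (Real.measurable_exp.comp measurable_neg)

lemma aux_integrable (β : ℝ) (hβ : 0 < β) :
    IntegrableOn (fun p : ℝ => (p * β / (p + β)) * Real.exp (-p)) (Ioi 0) := by
  refine Integrable.mono aux_integrable_xexp (aux_meas β) ?_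
  refine (ae_restrict_iff' measurableSet_Ioi).2 (Filter.Eventually.of_forall fun p hp => ?_)
  have h1 := aux_bound β hβ p hp
  have hp0 : (0:ℝ) < p := hp
  have hg : ‖p * Real.exp (-p)‖ = p * Real.exp (-p) := by
    rw [Real.norm_eq_abs, abs_of_nonneg (by positivity)]
  rw [hg]; exact h1

theorem fixed_point_exists (σ2 α : ℝ) (hσ : 0 < σ2) (hα : 0 ≤ α) :
    ∃ β : ℝ, 0 < β ∧
      β = σ2 + α * ∫ p in Ioi (0:ℝ), (p * β / (p + β)) * Real.exp (-p) := by
  set F : ℝ → ℝ := fun β => ∫ p in Ioi (0:ℝ), (p * β / (p + β)) * Real.exp (-p) with hF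
  set C : ℝ := ∫ p in Ioi (0:ℝ), p * Real.exp (-p) with hC
  have hC0 : 0 ≤ C := by
    apply setIntegral_nonneg measurableSet_Ioi
    intro p hp
    have : (0:ℝ) < p := hp
    positivity
  -- F is nonneg and bounded by C for β > 0
  have hF0 : ∀ β : ℝ, 0 < β → 0 ≤ F β := by
    intro β hβ
    apply setIntegral_nonneg measurableSet_Ioi
    intro p hp
    have hp0 : (0:ℝ) < p := hp
    have : (0:ℝ) < p + β := by linarith
    positivity
  have hFC : ∀ β : ℝ, 0 < β → F β ≤ C := by
    intro β hβ
    apply setIntegral_mono_on (aux_integrable β hβ) aux_integrable_xexp measurableSet_Ioi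
    intro p hp
    have h := aux_bound β hβ p hp
    calc p * β / (p + β) * Real.exp (-p) ≤ ‖p * β / (p + β) * Real.exp (-p)‖ := le_abs_self _
    _ ≤ p * Real.exp (-p) := h
  -- continuity of F at points β₀ > 0
  have hFcont : ∀ β₀ : ℝ, 0 < β₀ → ContinuousAt F β₀ := by
    intro β₀ hβ₀
    apply MeasureTheory.continuousAt_of_dominated (bound := fun p => p * Real.exp (-p))
      (F := fun β p => (p * β / (p + β)) * Real.exp (-p))
    · exact Filter.Eventually.of_forall fun β => aux_meas β
    · filter_upwards [eventually_gt_nhds hβ₀] with β hβ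
      exact (ae_restrict_iff' measurableSet_Ioi).2
        (Filter.Eventually.of_forall fun p hp => aux_bound β hβ p hp)
    · exact aux_integrable_xexp
    · refine (ae_restrict_iff' measurableSet_Ioi).2
        (Filter.Eventually.of_forall fun p hp => ?_)
      have hp0 : (0:ℝ) < p := hp
      have hne : p + β₀ ≠ 0 := by linarith
      exact (((continuousAt_const.mul continuousAt_id).div
        (continuousAt_const.add continuousAt_id) hne).mul continuousAt_const)
  -- IVT on h(β) = σ2 + α * F β - β on [σ2, σ2 + α*C]
  set a : ℝ := σ2
  set b : ℝ := σ2 + α * C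
  have hab : a ≤ b := by
    have : 0 ≤ α * C := mul_nonneg hα hC0
    simp [a, b]; linarith
  have hpos : ∀ β ∈ Icc a b, 0 < β := fun β hβ => lt_of_lt_of_le hσ hβ.1
  set h : ℝ → ℝ := fun β => σ2 + α * F β - β with hh
  have hcont : ContinuousOn h (Icc a b) := by
    intro β hβ
    exact ((((continuousAt_const.add
      (continuousAt_const.mul (hFcont β (hpos β hβ)))).sub continuousAt_id)).continuousWithinAt)
  have hha : 0 ≤ h a := by
    have := hF0 a hσ
    have : 0 ≤ α * F a := mul_nonneg hα this
    simp [hh, a]; linarith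
  have hhb : h b ≤ 0 := by
    have h1 : F b ≤ C := hFC b (hpos b ⟨hab, le_refl b⟩)
    have h2 : α * F b ≤ α * C := mul_le_mul_of_nonneg_left h1 hα
    simp [hh, b]; linarith
  have : (0:ℝ) ∈ Icc (h b) (h a) := ⟨hhb, hha⟩
  obtain ⟨β, hβmem, hβeq⟩ := intermediate_value_Icc' hab hcont this
  refine ⟨β, hpos β hβmem, ?_⟩
  have : σ2 + α * F β - β = 0 := hβeq
  show β = σ2 + α * F β
  linarith
end

section
/- For σ² > 0 and 0 ≤ α < 1, the map g(β) = σ² + α ∫₀^∞ (pβ/(p+β)) e^{-p} dp has a unique fixed point β* > 0, and for any starting point β₀ > 0 the iteration β_{n+1} = g(β_n) converges to β*. -/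
open MeasureTheory Set Filter

private lemma rbv_integrable {β : ℝ} (hβ : 0 < β) :
    IntegrableOn (fun p : ℝ => (p * β / (p + β)) * Real.exp (-p)) (Ioi 0) := by
  have hexp : IntegrableOn (fun p : ℝ => β * Real.exp (-p)) (Ioi (0:ℝ)) := by
    simpa [IntegrableOn] using ((exp_neg_integrableOn_Ioi (0:ℝ) one_pos).const_mul β)
  refine MeasureTheory.Integrable.mono hexp ?_ ?_
  · apply Measurable.aestronglyMeasurable
    fun_prop
  · filter_upwards [ae_restrict_mem measurableSet_Ioi] with p hp
    have hp0 : 0 < p := hp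
    have hpb : 0 < p + β := by linarith
    have h1 : p * β / (p + β) ≤ β := by
      rw [div_le_iff₀ hpb]; nlinarith
    have h0 : 0 ≤ p * β / (p + β) := by positivity
    have he : 0 < Real.exp (-p) := Real.exp_pos _
    rw [Real.norm_eq_abs, Real.norm_eq_abs, abs_of_nonneg (by positivity),
      abs_of_nonneg (by positivity)]
    exact mul_le_mul_of_nonneg_right h1 he.le

private lemma rbv_int_nonneg {β : ℝ} (hβ : 0 < β) :
    0 ≤ ∫ p in Ioi (0:ℝ), (p * β / (p + β)) * Real.exp (-p) := by
  refine setIntegral_nonneg measurableSet_Ioi fun p hp => ?_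
  have hp0 : 0 < p := hp
  have hpb : 0 < p + β := by linarith
  positivity

private lemma rbv_lip {β1 β2 : ℝ} (h1 : 0 < β1) (h2 : 0 < β2) :
    |(∫ p in Ioi (0:ℝ), (p * β1 / (p + β1)) * Real.exp (-p)) -
      ∫ p in Ioi (0:ℝ), (p * β2 / (p + β2)) * Real.exp (-p)| ≤ |β1 - β2| := by
  rw [← integral_sub (rbv_integrable h1) (rbv_integrable h2)]
  have hbound : ∀ p ∈ Ioi (0:ℝ),
      |(p * β1 / (p + β1)) * Real.exp (-p) - (p * β2 / (p + β2)) * Real.exp (-p)|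
        ≤ |β1 - β2| * Real.exp (-p) := by
    intro p hp
    have hp0 : 0 < p := hp
    have hb1 : 0 < p + β1 := by linarith
    have hb2 : 0 < p + β2 := by linarith
    have he : 0 < Real.exp (-p) := Real.exp_pos _
    rw [← sub_mul, abs_mul, abs_of_pos he]
    refine mul_le_mul_of_nonneg_right ?_ he.le
    have key : p * β1 / (p + β1) - p * β2 / (p + β2)
        = p ^ 2 * (β1 - β2) / ((p + β1) * (p + β2)) := by
      field_simp; ring
    rw [key, abs_div, abs_mul, abs_of_pos (mul_pos hb1 hb2),
      abs_of_pos (by positivity : (0:ℝ) < p ^ 2)]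
    rw [div_le_iff₀ (mul_pos hb1 hb2)]
    have : p ^ 2 ≤ (p + β1) * (p + β2) := by nlinarith
    nlinarith [abs_nonneg (β1 - β2)]
  calc |∫ p in Ioi (0:ℝ), ((p * β1 / (p + β1)) * Real.exp (-p) -
          (p * β2 / (p + β2)) * Real.exp (-p))|
      ≤ ∫ p in Ioi (0:ℝ), |β1 - β2| * Real.exp (-p) := by
        have hn := norm_integral_le_integral_norm (μ := volume.restrict (Ioi (0:ℝ)))
          (fun p : ℝ => (p * β1 / (p + β1)) * Real.exp (-p) -
            (p * β2 / (p + β2)) * Real.exp (-p))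
        simp only [Real.norm_eq_abs] at hn
        refine hn.trans ?_
        refine setIntegral_mono_on ?_ ?_ measurableSet_Ioi hbound
        · exact ((rbv_integrable h1).sub (rbv_integrable h2)).abs
        · simpa [IntegrableOn] using ((exp_neg_integrableOn_Ioi (0:ℝ) one_pos).const_mul |β1 - β2|)
    _ = |β1 - β2| := by
        rw [integral_const_mul]
        rw [integral_exp_neg_Ioi_zero, mul_one]

theorem fixed_point_unique_and_iteration_converges
    (σ2 α : ℝ) (hσ : 0 < σ2) (hα0 : 0 ≤ α) (hα1 : α < 1) :
    ∃ βstar : ℝ, (0 < βstar ∧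
        βstar = σ2 + α * ∫ p in Ioi (0:ℝ), (p * βstar / (p + βstar)) * Real.exp (-p)) ∧
      (∀ β : ℝ, 0 < β →
        β = σ2 + α * ∫ p in Ioi (0:ℝ), (p * β / (p + β)) * Real.exp (-p) → β = βstar) ∧
      ∀ β0 : ℝ, 0 < β0 →
        Tendsto (fun n : ℕ =>
            (fun β : ℝ => σ2 + α * ∫ p in Ioi (0:ℝ), (p * β / (p + β)) * Real.exp (-p))^[n] β0)
          atTop (nhds βstar) := by
  set g : ℝ → ℝ := fun β : ℝ => σ2 + α * ∫ p in Ioi (0:ℝ), (p * β / (p + β)) * Real.exp (-p)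
    with hg
  set G : ℝ → ℝ := fun β => g (max β σ2) with hGdef
  -- g values lower bound
  have hg_lb : ∀ β : ℝ, 0 < β → σ2 ≤ g β := by
    intro β hβ
    have := rbv_int_nonneg hβ
    simp only [hg]
    nlinarith
  have hGg : ∀ β : ℝ, σ2 ≤ β → G β = g β := by
    intro β hβ; simp [hGdef, max_eq_left hβ]
  -- contraction
  have hK : ContractingWith (⟨α, hα0⟩ : NNReal) G := by
    constructor
    · exact_mod_cast hα1
    · refine lipschitzWith_iff_dist_le_mul.mpr ?_
      intro x y
      simp only [Real.dist_eq, hGdef, hg]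
      have hx : 0 < max x σ2 := lt_of_lt_of_le hσ (le_max_right _ _)
      have hy : 0 < max y σ2 := lt_of_lt_of_le hσ (le_max_right _ _)
      have h1 := rbv_lip hx hy
      have h2 : |max x σ2 - max y σ2| ≤ |x - y| := by
        rcases le_total x y with h | h <;> rcases le_total x σ2 with h' | h' <;>
          rcases le_total y σ2 with h'' | h'' <;>
          simp [max_eq_left, max_eq_right, h', h'', abs_le] <;>
          constructor <;> cases abs_le.mp (le_refl |x - y|) <;> linarith [abs_nonneg (x - y),
            le_abs_self (x - y), neg_abs_le (x - y)]
      have : |α * (∫ p in Ioi (0:ℝ), (p * max x σ2 / (p + max x σ2)) * Real.exp (-p))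
          - α * (∫ p in Ioi (0:ℝ), (p * max y σ2 / (p + max y σ2)) * Real.exp (-p))|
          ≤ α * |x - y| := by
        rw [← mul_sub, abs_mul, abs_of_nonneg hα0]
        exact mul_le_mul_of_nonneg_left (h1.trans h2) hα0
      calc |σ2 + α * (∫ p in Ioi (0:ℝ), (p * max x σ2 / (p + max x σ2)) * Real.exp (-p))
            - (σ2 + α * ∫ p in Ioi (0:ℝ), (p * max y σ2 / (p + max y σ2)) * Real.exp (-p))|
          = |α * (∫ p in Ioi (0:ℝ), (p * max x σ2 / (p + max x σ2)) * Real.exp (-p))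
            - α * (∫ p in Ioi (0:ℝ), (p * max y σ2 / (p + max y σ2)) * Real.exp (-p))| := by
            congr 1; ring
        _ ≤ α * |x - y| := this
        _ = ↑(⟨α, hα0⟩ : NNReal) * dist x y := by simp [Real.dist_eq]
  set βstar := ContractingWith.fixedPoint G hK with hβs
  have hfix : G βstar = βstar := hK.fixedPoint_isFixedPt
  have hβs_ge : σ2 ≤ βstar := by
    rw [← hfix, hGdef]
    exact hg_lb _ (lt_of_lt_of_le hσ (le_max_right _ _))
  have hβs_pos : 0 < βstar := lt_of_lt_of_le hσ hβs_ge
  have hgfix : g βstar = βstar := by rw [← hGg _ hβs_ge]; exact hfix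
  refine ⟨βstar, ⟨hβs_pos, hgfix.symm⟩, ?_, ?_⟩
  · intro β hβ hfixβ
    have hβge : σ2 ≤ β := by rw [hfixβ]; exact hg_lb β hβ
    have : Function.IsFixedPt G β := by
      unfold Function.IsFixedPt
      rw [hGg _ hβge]
      exact hfixβ.symm
    exact hK.fixedPoint_unique this
  · intro β0 hβ0
    have hstep : ∀ n : ℕ, ∀ x : ℝ, σ2 ≤ x → g^[n] x = G^[n] x := by
      intro n
      induction n with
      | zero => intro x _; simp
      | succ n ih =>
        intro x hx
        rw [Function.iterate_succ_apply, Function.iterate_succ_apply,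
          ih (g x) (hg_lb x (lt_of_lt_of_le hσ hx)), hGg _ hx]
    have htend : Tendsto (fun n : ℕ => G^[n] (g β0)) atTop (nhds βstar) :=
      hK.tendsto_iterate_fixedPoint (g β0)
    have hshift : (fun n : ℕ => g^[n + 1] β0) = fun n : ℕ => G^[n] (g β0) := by
      funext n
      rw [Function.iterate_succ_apply, hstep n (g β0) (hg_lb β0 hβ0)]
    have : Tendsto (fun n : ℕ => g^[n + 1] β0) atTop (nhds βstar) := by
      rw [hshift]; exact htend
    exact (tendsto_add_atTop_iff_nat 1).mp this
end

section
/- Let A(s,t) and S(s,t) be independent nonnegative stationary cumulative arrival and service processes of a FIFO queue with departures D, and suppose for some θ > 0 and ε ∈ (0,1) and d ≥ 0 that Σ_{s=d}^{∞} M_A(θ, s−d) M̂_S(θ, s) ≤ ε, where M_A(θ,u) = E[e^{θA(0,u)}] and M̂_S(θ,u) = E[e^{−θS(0,u)}]. Then for each time t, the probability that the virtual delay at t exceeds d is at most Σ_{s=d}^{∞} M_A(θ, s−d) M̂_S(θ, s) ≤ ε, by Chernoff's bound and the union bound applied to P{∃ s ≥ d : A(0, t−d) − S(0, t) component exceeds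 0}. -/
open MeasureTheory ProbabilityTheory

theorem stochastic_delay_bound {Ω : Type*} [MeasureSpace Ω]
    [IsProbabilityMeasure (ℙ : Measure Ω)]
    (A S : ℕ → Ω → ℝ) (θ ε : ℝ) (hθ : 0 < θ) (hε0 : 0 < ε) (hε1 : ε < 1) (d : ℕ)
    (hAnn : ∀ u ω, 0 ≤ A u ω) (hSnn : ∀ s ω, 0 ≤ S s ω)
    (hAm : ∀ u, Measurable (A u)) (hSm : ∀ s, Measurable (S s))
    (hind : ∀ u : ℕ, IndepFun (A u) (S (u + d)) ℙ)
    (MA MS : ℕ → ℝ)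
    (hMAi : ∀ u, Integrable (fun ω => Real.exp (θ * A u ω)) ℙ)
    (hMA : ∀ u, ∫ ω, Real.exp (θ * A u ω) ∂ℙ = MA u)
    (hMSi : ∀ s, Integrable (fun ω => Real.exp (-θ * S s ω)) ℙ)
    (hMS : ∀ s, ∫ ω, Real.exp (-θ * S s ω) ∂ℙ = MS s)
    (hsum : Summable (fun u : ℕ => MA u * MS (u + d)))
    (hbound : ∑' u : ℕ, MA u * MS (u + d) ≤ ε) :
    ℙ {ω | ∃ u : ℕ, A u ω - S (u + d) ω > 0}
        ≤ ENNReal.ofReal (∑' u : ℕ, MA u * MS (u + d)) ∧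
    ℙ {ω | ∃ u : ℕ, A u ω - S (u + d) ω > 0} ≤ ENNReal.ofReal ε := by
  have hMAnn : ∀ u, 0 ≤ MA u := fun u => (hMA u) ▸ integral_nonneg (fun ω => (Real.exp_pos _).le)
  have hMSnn : ∀ s, 0 ≤ MS s := fun s => (hMS s) ▸ integral_nonneg (fun ω => (Real.exp_pos _).le)
  -- per-term Chernoff bound
  have key : ∀ u : ℕ, ℙ {ω | A u ω - S (u + d) ω > 0} ≤ ENNReal.ofReal (MA u * MS (u + d)) := by
    intro u
    set f : Ω → ℝ := fun ω => Real.exp (θ * A u ω) * Real.exp (-θ * S (u + d) ω) with hf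
    have hindf : IndepFun (fun ω => Real.exp (θ * A u ω))
        (fun ω => Real.exp (-θ * S (u + d) ω)) ℙ :=
      (hind u).comp (Real.measurable_exp.comp (measurable_const_mul θ))
        (Real.measurable_exp.comp (measurable_const_mul (-θ)))
    have hfi : Integrable f ℙ := hindf.integrable_mul (hMAi u) (hMSi (u + d))
    have hint : ∫ ω, f ω ∂ℙ = MA u * MS (u + d) := by
      have h := hindf.integral_fun_mul_eq_mul_integral (hMAi u).aestronglyMeasurable (hMSi (u + d)).aestronglyMeasurable
      rw [hMA, hMS] at h
      exact h
    have hsub : {ω | A u ω - S (u + d) ω > 0} ⊆ {ω | (1 : ℝ) ≤ f ω} := by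
      intro ω hω
      simp only [Set.mem_setOf_eq] at hω ⊢
      have : (0 : ℝ) < θ * (A u ω - S (u + d) ω) := mul_pos hθ hω
      have h1 : (1 : ℝ) ≤ Real.exp (θ * (A u ω - S (u + d) ω)) :=
        Real.one_le_exp (le_of_lt this)
      calc (1 : ℝ) ≤ Real.exp (θ * (A u ω - S (u + d) ω)) := h1
        _ = f ω := by
            show Real.exp (θ * (A u ω - S (u + d) ω))
              = Real.exp (θ * A u ω) * Real.exp (-θ * S (u + d) ω)
            rw [← Real.exp_add]; ring_nf
    have hmarkov := mul_meas_ge_le_integral_of_nonneg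
      (μ := ℙ) (f := f) (ae_of_all _ fun ω => (mul_pos (Real.exp_pos _) (Real.exp_pos _)).le)
      hfi 1
    rw [one_mul, hint] at hmarkov
    calc ℙ {ω | A u ω - S (u + d) ω > 0} ≤ ℙ {ω | (1 : ℝ) ≤ f ω} := measure_mono hsub
      _ = ENNReal.ofReal ((ℙ {ω | (1 : ℝ) ≤ f ω}).toReal) :=
          (ENNReal.ofReal_toReal (measure_ne_top _ _)).symm
      _ ≤ ENNReal.ofReal (MA u * MS (u + d)) := ENNReal.ofReal_le_ofReal hmarkov
  have hunion : ℙ {ω | ∃ u : ℕ, A u ω - S (u + d) ω > 0}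
      ≤ ENNReal.ofReal (∑' u : ℕ, MA u * MS (u + d)) := by
    have : {ω | ∃ u : ℕ, A u ω - S (u + d) ω > 0}
        = ⋃ u : ℕ, {ω | A u ω - S (u + d) ω > 0} := by
      ext ω; simp
    rw [this]
    calc ℙ (⋃ u : ℕ, {ω | A u ω - S (u + d) ω > 0})
        ≤ ∑' u : ℕ, ℙ {ω | A u ω - S (u + d) ω > 0} := measure_iUnion_le _
      _ ≤ ∑' u : ℕ, ENNReal.ofReal (MA u * MS (u + d)) := ENNReal.tsum_le_tsum key
      _ = ENNReal.ofReal (∑' u : ℕ, MA u * MS (u + d)) :=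
          (ENNReal.ofReal_tsum_of_nonneg (fun u => mul_nonneg (hMAnn u) (hMSnn _)) hsum).symm
  exact ⟨hunion, hunion.trans (ENNReal.ofReal_le_ofReal hbound)⟩
end
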